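/- Let s : ℕ → ℝ be a real sequence satisfying s(0) ≥ 0, and let p ∈ ℕ be such that the sequence Δ^p s is concave and is not bounded from above. Then: (1) s(n) > 0 for every n ≥ 1; (2) s is strictly increasing; (3) s(n)/n^p → +∞ as n → +∞; (4) the sequence (s(n)/n^{p+1})_{n≥1} is bounded; (5) s(n+1)/s(n) → 1 as n → +∞; (6) Δ^{p+2} s ∈ ℓ¹, i.e., ∑_{n=0}^{∞} |(Δ^{p+2}s)(n)| converges. If in addition p ≥ 1, then the sequence s is also convex. -/

import Mathlib

/-- The difference operator on real sequences: `(Δa)(0) = a(0)` and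
`(Δa)(n) = a(n) − a(n−1)` for `n ≥ 1`. -/
def dSeq (a : ℕ → ℝ) : ℕ → ℝ := fun n =>
  match n with
  | 0 => a 0
  | n + 1 => a (n + 1) - a n

open Filter

def pSum (a : ℕ → ℝ) : ℕ → ℝ := fun n => ∑ k ∈ Finset.range (n + 1), a k

lemma pSum_zero (a : ℕ → ℝ) : pSum a 0 = a 0 := by simp [pSum]

lemma pSum_succ (a : ℕ → ℝ) (n : ℕ) : pSum a (n + 1) = pSum a n + a (n + 1) :=
  Finset.sum_range_succ a (n + 1)

lemma pSum_dSeq (a : ℕ → ℝ) : pSum (dSeq a) = a := by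
  funext n
  induction n with
  | zero => simp [pSum, dSeq]
  | succ n ih => rw [pSum_succ, ih]; show a n + (a (n+1) - a n) = _; ring

lemma pSum_iter_dSeq (p : ℕ) (a : ℕ → ℝ) : pSum^[p] (dSeq^[p] a) = a := by
  induction p generalizing a with
  | zero => rfl
  | succ p ih =>
    rw [Function.iterate_succ_apply' dSeq, Function.iterate_succ_apply pSum,
      pSum_dSeq, ih]

lemma dSeq_iter_zero (p : ℕ) (a : ℕ → ℝ) : dSeq^[p] a 0 = a 0 := by
  induction p with
  | zero => rfl
  | succ p ih =>
    rw [Function.iterate_succ_apply' dSeq]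
    show dSeq^[p] a 0 = a 0
    exact ih

lemma pSum_nonneg {a : ℕ → ℝ} (h : ∀ n, 0 ≤ a n) (n : ℕ) : 0 ≤ pSum a n :=
  Finset.sum_nonneg fun k _ => h k

lemma pSum_mono {a : ℕ → ℝ} (h : ∀ n, 0 ≤ a n) : Monotone (pSum a) :=
  monotone_nat_of_le_succ fun n => by rw [pSum_succ]; linarith [h (n + 1)]

lemma pSum_strictMono {a : ℕ → ℝ} (h : ∀ n, 1 ≤ n → 0 < a n) : StrictMono (pSum a) :=
  strictMono_nat_of_lt_succ fun n => by
    rw [pSum_succ]; linarith [h (n + 1) (by omega)]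

lemma pSum_pos {a : ℕ → ℝ} (h0 : 0 ≤ a 0) (h : ∀ n, 1 ≤ n → 0 < a n) :
    ∀ n, 1 ≤ n → 0 < pSum a n := fun n hn => by
  have := pSum_strictMono h (show 0 < n by omega)
  rw [pSum_zero] at this; linarith

lemma pSum_bound {a : ℕ → ℝ} {A : ℝ} {j : ℕ} (hA : 0 ≤ A)
    (h : ∀ k, a k ≤ A * (k + 1 : ℝ) ^ j) (n : ℕ) :
    pSum a n ≤ A * (n + 1 : ℝ) ^ (j + 1) := by
  calc pSum a n ≤ ∑ k ∈ Finset.range (n + 1), A * (n + 1 : ℝ) ^ j := by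
        apply Finset.sum_le_sum
        intro k hk
        refine (h k).trans ?_
        have hk' : (k : ℝ) + 1 ≤ (n : ℝ) + 1 := by
          have := Finset.mem_range.mp hk
          have : (k : ℝ) ≤ (n : ℝ) := by exact_mod_cast Nat.lt_succ_iff.mp this
          linarith
        have hk0 : (0:ℝ) ≤ (k:ℝ) + 1 := by positivity
        gcongr
    _ ≤ A * (n + 1 : ℝ) ^ (j + 1) := by
        rw [Finset.sum_const, Finset.card_range, nsmul_eq_mul]
        push_cast
        exact le_of_eq (by rw [pow_succ]; ring)

lemma half_tendsto : Tendsto (fun n : ℕ => n / 2) atTop atTop :=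
  tendsto_atTop_atTop_of_monotone (fun _ _ h => Nat.div_le_div_right h)
    (fun b => ⟨2 * b, by omega⟩)

lemma pSum_step {a : ℕ → ℝ} {j : ℕ} (h0 : ∀ n, 0 ≤ a n) (hm : Monotone a)
    (ht : Tendsto (fun n => a n / (n : ℝ) ^ j) atTop atTop) :
    Tendsto (fun n => pSum a n / (n : ℝ) ^ (j + 1)) atTop atTop := by
  have h1 : Tendsto (fun n : ℕ => a (n / 2) / ((n / 2 : ℕ) : ℝ) ^ j / (4 : ℝ) ^ (j + 1))
      atTop atTop := (ht.comp half_tendsto).atTop_div_const (by positivity)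
  apply tendsto_atTop_mono' atTop _ h1
  filter_upwards [eventually_ge_atTop 2] with n hn
  set m := n / 2 with hm'
  have hnm : 2 * m ≤ n ∧ n ≤ 2 * m + 1 := by omega
  have hm1 : 1 ≤ m := by omega
  -- step a: pSum a n ≥ (n - m + 1) * a m
  have ha : ((n - m + 1 : ℕ) : ℝ) * a m ≤ pSum a n := by
    have hsub : Finset.Icc m n ⊆ Finset.range (n + 1) := by
      intro k hk; simp only [Finset.mem_Icc] at hk; simp only [Finset.mem_range]; omega
    have h2 : ∑ k ∈ Finset.Icc m n, a k ≤ pSum a n :=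
      Finset.sum_le_sum_of_subset_of_nonneg hsub (fun k _ _ => h0 k)
    have h3 : (Finset.Icc m n).card • a m ≤ ∑ k ∈ Finset.Icc m n, a k :=
      Finset.card_nsmul_le_sum _ _ _ (fun k hk => hm (Finset.mem_Icc.mp hk).1)
    rw [Nat.card_Icc, nsmul_eq_mul] at h3
    have : n + 1 - m = n - m + 1 := by omega
    rw [this] at h3
    linarith
  -- step b : the comparison of denominators
  have hden : (n : ℝ) ^ (j + 1) ≤ (4 * ((n - m + 1 : ℕ) : ℝ)) * ((4 : ℝ) * m) ^ j := by
    have hb1 : (n : ℝ) ≤ 4 * ((n - m + 1 : ℕ) : ℝ) := by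
      have : n ≤ 4 * (n - m + 1) := by omega
      exact_mod_cast this
    have hb2 : (n : ℝ) ≤ 4 * (m : ℝ) := by
      have : n ≤ 4 * m := by omega
      exact_mod_cast this
    calc (n : ℝ) ^ (j + 1) = (n : ℝ) * (n : ℝ) ^ j := by rw [pow_succ]; ring
      _ ≤ (4 * ((n - m + 1 : ℕ) : ℝ)) * ((4 : ℝ) * m) ^ j := by
          gcongr
  have hnum : (0 : ℝ) ≤ ((n - m + 1 : ℕ) : ℝ) * a m := mul_nonneg (Nat.cast_nonneg _) (h0 m)
  have hpos : (0 : ℝ) < (n : ℝ) ^ (j + 1) := by positivity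
  have key : ((n - m + 1 : ℕ) : ℝ) * a m / ((4 * ((n - m + 1 : ℕ) : ℝ)) * ((4 : ℝ) * m) ^ j)
      ≤ ((n - m + 1 : ℕ) : ℝ) * a m / (n : ℝ) ^ (j + 1) :=
    div_le_div_of_nonneg_left hnum hpos hden
  have heq : ((n - m + 1 : ℕ) : ℝ) * a m / ((4 * ((n - m + 1 : ℕ) : ℝ)) * ((4 : ℝ) * m) ^ j)
      = a m / (m : ℝ) ^ j / (4 : ℝ) ^ (j + 1) := by
    have h5 : ((n - m + 1 : ℕ) : ℝ) ≠ 0 := by positivity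
    have h6 : (m : ℝ) ≠ 0 := by
      have : (0:ℕ) < m := hm1
      positivity
    rw [mul_pow]
    field_simp
    ring
  calc a (n/2) / ((n/2 : ℕ) : ℝ) ^ j / (4 : ℝ) ^ (j + 1)
      = ((n - m + 1 : ℕ) : ℝ) * a m / ((4 * ((n - m + 1 : ℕ) : ℝ)) * ((4 : ℝ) * m) ^ j) := heq.symm
    _ ≤ ((n - m + 1 : ℕ) : ℝ) * a m / (n : ℝ) ^ (j + 1) := key
    _ ≤ pSum a n / (n : ℝ) ^ (j + 1) := by gcongr


/-- Theorem 4.7: let `s(0) ≥ 0` and let `p ∈ ℕ` be such that `Δ^p s` is concave and not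
bounded from above. Then (1) `s(n) > 0` for `n ≥ 1`; (2) `s` is strictly increasing;
(3) `s(n)/n^p → +∞`; (4) `(s(n)/n^{p+1})_{n≥1}` is bounded; (5) `s(n+1)/s(n) → 1`;
(6) `Δ^{p+2} s ∈ ℓ¹`. If moreover `p ≥ 1` then `s` is convex. -/
theorem stmt12 (s : ℕ → ℝ) (p : ℕ) (h0 : 0 ≤ s 0)
    (hconc : Antitone fun n => dSeq^[p] s (n + 1) - dSeq^[p] s n)
    (hub : ¬∃ M : ℝ, ∀ n, dSeq^[p] s n ≤ M) :
    (∀ n : ℕ, 1 ≤ n → 0 < s n) ∧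
    StrictMono s ∧
    Filter.Tendsto (fun n : ℕ => s n / (n : ℝ) ^ p) Filter.atTop Filter.atTop ∧
    (∃ M : ℝ, ∀ n : ℕ, 1 ≤ n → |s n / (n : ℝ) ^ (p + 1)| ≤ M) ∧
    Filter.Tendsto (fun n => s (n + 1) / s n) Filter.atTop (nhds 1) ∧
    Summable (fun n => |dSeq^[p + 2] s n|) ∧
    (1 ≤ p → Monotone fun n => s (n + 1) - s n) := by
  set t : ℕ → ℝ := dSeq^[p] s with htdef
  have hst : pSum^[p] t = s := pSum_iter_dSeq p s
  have ht0 : t 0 = s 0 := dSeq_iter_zero p s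
  set d : ℕ → ℝ := fun n => t (n + 1) - t n with hddef
  have htsucc : ∀ n, t (n + 1) = t n + d n := fun n => by simp [hddef]
  -- d is positive
  have hdpos : ∀ n, 0 < d n := by
    by_contra h
    push_neg at h
    obtain ⟨N, hN⟩ := h
    apply hub
    refine ⟨∑ k ∈ Finset.range (N + 1), |t k|, fun n => ?_⟩
    have hle : ∀ n, N ≤ n → t n ≤ t N := by
      intro n hn
      induction n, hn using Nat.le_induction with
      | base => exact le_rfl
      | succ n hn ih =>
        have : d n ≤ d N := hconc hn
        rw [htsucc n]; linarith
    rcases le_or_gt n N with h' | h'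
    · calc t n ≤ |t n| := le_abs_self _
        _ ≤ ∑ k ∈ Finset.range (N + 1), |t k| :=
          Finset.single_le_sum (f := fun k => |t k|) (fun k _ => abs_nonneg _)
            (Finset.mem_range.mpr (by omega))
    · calc t n ≤ t N := hle n h'.le
        _ ≤ |t N| := le_abs_self _
        _ ≤ ∑ k ∈ Finset.range (N + 1), |t k| :=
          Finset.single_le_sum (f := fun k => |t k|) (fun k _ => abs_nonneg _)
            (Finset.mem_range.mpr (by omega))
  have htsm : StrictMono t := strictMono_nat_of_lt_succ fun n => by
    rw [htsucc n]; linarith [hdpos n]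
  have ht0' : 0 ≤ t 0 := ht0 ▸ h0
  have htnn : ∀ n, 0 ≤ t n := fun n => ht0'.trans (htsm.monotone (Nat.zero_le n))
  have htpos : ∀ n, 1 ≤ n → 0 < t n := fun n hn => by
    have h1 : t 0 < t 1 := htsm Nat.zero_lt_one
    have h2 : t 1 ≤ t n := htsm.monotone hn
    linarith
  have httop : Tendsto t atTop atTop := by
    apply tendsto_atTop_atTop_of_monotone htsm.monotone
    intro b
    by_contra hb
    push_neg at hb
    exact hub ⟨b, fun n => (hb n).le⟩
  -- linear bound on t
  set A : ℝ := |t 0| + |d 0| with hAdef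
  have hA : 0 ≤ A := by positivity
  have hlin : ∀ n, t n ≤ A * ((n : ℝ) + 1) ^ (0 + 1) := by
    have key : ∀ n, t n ≤ |t 0| + n * |d 0| := by
      intro n
      induction n with
      | zero => simpa using le_abs_self (t 0)
      | succ n ih =>
        have h1 : d n ≤ d 0 := hconc (Nat.zero_le n)
        have h2 : d 0 ≤ |d 0| := le_abs_self _
        rw [htsucc n]
        push_cast
        linarith
    intro n
    have := key n
    have h3 : (0:ℝ) ≤ n := Nat.cast_nonneg n
    have h4 : (0:ℝ) ≤ |t 0| := abs_nonneg _
    have h5 : (0:ℝ) ≤ |d 0| := abs_nonneg _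
    rw [zero_add, pow_one]
    nlinarith
  -- grand induction on iterated partial sums
  have hiter : ∀ j : ℕ, (∀ n, 0 ≤ pSum^[j] t n) ∧ (∀ n, 1 ≤ n → 0 < pSum^[j] t n) ∧
      StrictMono (pSum^[j] t) ∧ Monotone (pSum^[j] t) ∧
      Tendsto (fun n => pSum^[j] t n / (n : ℝ) ^ j) atTop atTop ∧
      (∀ n, pSum^[j] t n ≤ A * ((n : ℝ) + 1) ^ (j + 1)) := by
    intro j
    induction j with
    | zero =>
      refine ⟨htnn, htpos, htsm, htsm.monotone, ?_, hlin⟩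
      apply httop.congr
      intro n
      show t n = t n / (n : ℝ) ^ 0
      simp
    | succ j ih =>
      obtain ⟨hnn, hpos, hsm, hmono, htend, hbd⟩ := ih
      rw [Function.iterate_succ_apply' pSum]
      have h00 : 0 ≤ pSum^[j] t 0 := hnn 0
      refine ⟨pSum_nonneg hnn, pSum_pos h00 hpos, pSum_strictMono hpos,
        pSum_mono hnn, pSum_step hnn hmono htend, pSum_bound hA hbd⟩
  obtain ⟨hnn, hpos, hsm, hmono, htend, hbd⟩ := hiter p
  rw [hst] at hnn hpos hsm hmono htend hbd
  -- the difference bound for (5) and nonneg of differences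
  have hdiff : ∃ B : ℝ, 0 ≤ B ∧ ∀ n, s (n + 1) - s n ≤ B * ((n : ℝ) + 1) ^ p := by
    cases p with
    | zero =>
      refine ⟨d 0, (hdpos 0).le, fun n => ?_⟩
      have h1 : d n ≤ d 0 := hconc (Nat.zero_le n)
      have : s (n + 1) - s n = d n := by
        simp only [hddef, htdef]
        rfl
      rw [this]
      simpa using h1
    | succ q =>
      obtain ⟨hnn', _, _, _, _, hbd'⟩ := hiter q
      refine ⟨A * 2 ^ (q + 1), by positivity, fun n => ?_⟩
      have heq : s (n + 1) - s n = pSum^[q] t (n + 1) := by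
        rw [← hst, Function.iterate_succ_apply' pSum, pSum_succ]
        ring
      rw [heq]
      calc pSum^[q] t (n + 1) ≤ A * (((n + 1 : ℕ) : ℝ) + 1) ^ (q + 1) := hbd' (n + 1)
        _ ≤ A * (2 * ((n : ℝ) + 1)) ^ (q + 1) := by
            gcongr
            push_cast
            linarith
        _ = A * 2 ^ (q + 1) * ((n : ℝ) + 1) ^ (q + 1) := by rw [mul_pow]; ring
  obtain ⟨B, hB, hBd⟩ := hdiff
  refine ⟨hpos, hsm, htend, ?_, ?_, ?_, ?_⟩
  -- (4) boundedness of s n / n^(p+1)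
  · refine ⟨A * 2 ^ (p + 1), fun n hn => ?_⟩
    have hnp : (0:ℝ) < (n : ℝ) ^ (p + 1) := by
      have : (0:ℝ) < n := by exact_mod_cast hn
      positivity
    have hsn : 0 ≤ s n := (hpos n hn).le
    rw [abs_of_nonneg (div_nonneg hsn hnp.le), div_le_iff₀ hnp]
    calc s n ≤ A * ((n : ℝ) + 1) ^ (p + 1) := hbd n
      _ ≤ A * (2 * (n : ℝ)) ^ (p + 1) := by
          gcongr
          have : (1:ℝ) ≤ n := by exact_mod_cast hn
          linarith
      _ = A * 2 ^ (p + 1) * (n : ℝ) ^ (p + 1) := by rw [mul_pow]; ring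
  -- (5) ratio tends to 1
  · have hinv : Tendsto (fun n => B * 2 ^ p * (s n / (n : ℝ) ^ p)⁻¹) atTop (nhds 0) := by
      have := htend.inv_tendsto_atTop
      have h2 := this.const_mul (B * 2 ^ p)
      simpa using h2
    have hq0 : Tendsto (fun n => (s (n + 1) - s n) / s n) atTop (nhds 0) := by
      apply squeeze_zero' (g := fun n => B * 2 ^ p * (s n / (n : ℝ) ^ p)⁻¹)
      · filter_upwards [eventually_ge_atTop 1] with n hn
        have := hsm (Nat.lt_succ_self n)
        exact div_nonneg (by linarith) (hpos n hn).le
      · filter_upwards [eventually_ge_atTop 1] with n hn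
        have hs : 0 < s n := hpos n hn
        have hn1 : (1:ℝ) ≤ n := by exact_mod_cast hn
        have hnp : (0:ℝ) < (n:ℝ) ^ p := by positivity
        rw [inv_div]
        calc (s (n + 1) - s n) / s n ≤ B * ((n : ℝ) + 1) ^ p / s n := by
              gcongr
              exact hBd n
          _ ≤ B * (2 * (n : ℝ)) ^ p / s n := by
              gcongr
              linarith
          _ = B * 2 ^ p * ((n : ℝ) ^ p / s n) := by rw [mul_pow]; ring
      · exact hinv
    have h1 : Tendsto (fun n : ℕ => 1 + (s (n + 1) - s n) / s n) atTop (nhds 1) := by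
      have := hq0.const_add 1
      simpa using this
    apply h1.congr'
    filter_upwards [eventually_ge_atTop 1] with n hn
    have hs : s n ≠ 0 := (hpos n hn).ne'
    field_simp
    ring
  -- (6) summability
  · have h2p : ∀ n, dSeq^[p + 2] s n = dSeq (dSeq t) n := by
      intro n
      have : p + 2 = 2 + p := by omega
      rw [this, Function.iterate_add_apply]
      rfl
    rw [show (fun n => |dSeq^[p + 2] s n|) = fun n => |dSeq (dSeq t) n| by
      funext n; rw [h2p]]
    rw [← summable_nat_add_iff 2]
    have habs : ∀ n : ℕ, |dSeq (dSeq t) (n + 2)| = d n - d (n + 1) := by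
      intro n
      have he : dSeq (dSeq t) (n + 2) = d (n + 1) - d n := rfl
      rw [he, abs_of_nonpos (by linarith [hconc (Nat.le_succ n)])]
      ring
    apply summable_of_sum_range_le (c := d 0)
    · intro n
      rw [habs n]
      linarith [hconc (Nat.le_succ n)]
    · intro n
      have : ∑ i ∈ Finset.range n, |dSeq (dSeq t) (i + 2)| =
          ∑ i ∈ Finset.range n, (d i - d (i + 1)) := by
        apply Finset.sum_congr rfl
        intro i _
        exact habs i
      rw [this, Finset.sum_range_sub' d n]
      linarith [hdpos n]
  -- (7) convexity for p ≥ 1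
  · intro hp
    obtain ⟨q, rfl⟩ : ∃ q, p = q + 1 := ⟨p - 1, by omega⟩
    obtain ⟨_, _, _, hmono', _, _⟩ := hiter q
    have heq : ∀ n, s (n + 1) - s n = pSum^[q] t (n + 1) := by
      intro n
      rw [← hst, Function.iterate_succ_apply' pSum, pSum_succ]
      ring
    intro m n hmn
    show s (m + 1) - s m ≤ s (n + 1) - s n
    rw [heq m, heq n]
    exact hmono' (by omega)
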